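/- Let δ ≥ 0 and x_m > 0, and define g(x) = x/(x_m²·√(x_m² − x²)) for x ∈ [0, x_m). Then g(0) = 0, g'(x) = (x_m² − x²)^{-3/2} > 0 on (0, x_m), and (1/2)·(∫₀^{x_m} g'(x)^{1/3} dx)³ / (∫₀^{x_m} (x + δx³)·g(x) dx) = (π²/4)·1/(1 + (3/4)δ x_m²). -/

import Mathlib

open MeasureTheory intervalIntegral Set

section aux

variable {x_m : ℝ}

/-- integrability of `φ(x) * (x_m² - x²)^(-1/2)` on `[0, x_m]`. -/
lemma aux_integrable (hxm : 0 < x_m) (φ : ℝ → ℝ) (hφ : Continuous φ) :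
    IntervalIntegrable (fun x => φ x * (x_m ^ 2 - x ^ 2) ^ (-(1/2) : ℝ)) volume 0 x_m := by
  obtain ⟨M, hM⟩ := (isCompact_Icc (a := (0:ℝ)) (b := x_m)).exists_bound_of_continuousOn
    hφ.continuousOn
  have hM0 : 0 ≤ M := le_trans (norm_nonneg _) (hM 0 ⟨le_refl _, hxm.le⟩)
  -- dominating function
  have hdom : IntervalIntegrable
      (fun x => M * x_m ^ (-(1/2) : ℝ) * (x_m - x) ^ (-(1/2) : ℝ)) volume 0 x_m := by
    have h1 : IntervalIntegrable (fun x : ℝ => x ^ (-(1/2) : ℝ)) volume x_m 0 := by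
      apply intervalIntegrable_rpow'
      norm_num
    have h2 := (h1.comp_sub_left x_m)
    simp only [sub_self, sub_zero] at h2
    exact h2.const_mul _
  rw [intervalIntegrable_iff_integrableOn_Ioo_of_le hxm.le] at hdom ⊢
  apply MeasureTheory.Integrable.mono hdom
  · apply ContinuousOn.aestronglyMeasurable _ measurableSet_Ioo
    apply ContinuousOn.mul hφ.continuousOn
    apply ContinuousOn.rpow_const (continuous_const.sub (continuous_pow 2)).continuousOn
    intro x hx
    have hx0 : 0 < x := hx.1
    have hxlt : x < x_m := hx.2
    exact Or.inl (ne_of_gt (by show (0:ℝ) < x_m ^ 2 - x ^ 2; nlinarith))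
  · filter_upwards [ae_restrict_mem measurableSet_Ioo] with x hx
    have hx0 : 0 < x := hx.1
    have hxle : x ≤ x_m := hx.2.le
    have hb0 : 0 ≤ x_m ^ 2 - x ^ 2 := by nlinarith
    have hfac : x_m ^ 2 - x ^ 2 = (x_m - x) * (x_m + x) := by ring
    have hsub : (0:ℝ) ≤ x_m - x := by linarith
    have hadd : (0:ℝ) < x_m + x := by linarith
    rw [Real.norm_eq_abs, Real.norm_eq_abs, abs_mul,
      abs_of_nonneg (Real.rpow_nonneg hb0 _),
      abs_of_nonneg (by positivity : (0:ℝ) ≤ M * x_m ^ (-(1/2) : ℝ) * (x_m - x) ^ (-(1/2) : ℝ))]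
    have hsplit : (x_m ^ 2 - x ^ 2) ^ (-(1/2) : ℝ)
        = (x_m - x) ^ (-(1/2) : ℝ) * (x_m + x) ^ (-(1/2) : ℝ) := by
      rw [hfac, Real.mul_rpow hsub hadd.le]
    have hle1 : (x_m + x) ^ (-(1/2) : ℝ) ≤ x_m ^ (-(1/2) : ℝ) :=
      Real.rpow_le_rpow_of_nonpos hxm (by linarith) (by norm_num)
    have hφle : |φ x| ≤ M := by
      have := hM x ⟨hx0.le, hxle⟩
      simpa [Real.norm_eq_abs] using this
    calc |φ x| * (x_m ^ 2 - x ^ 2) ^ (-(1/2) : ℝ)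
        ≤ M * (x_m ^ 2 - x ^ 2) ^ (-(1/2) : ℝ) := by
          apply mul_le_mul_of_nonneg_right hφle (Real.rpow_nonneg hb0 _)
      _ = M * ((x_m - x) ^ (-(1/2) : ℝ) * (x_m + x) ^ (-(1/2) : ℝ)) := by rw [hsplit]
      _ ≤ M * ((x_m - x) ^ (-(1/2) : ℝ) * x_m ^ (-(1/2) : ℝ)) := by
          apply mul_le_mul_of_nonneg_left _ hM0
          exact mul_le_mul_of_nonneg_left hle1 (Real.rpow_nonneg hsub _)
      _ = M * x_m ^ (-(1/2) : ℝ) * (x_m - x) ^ (-(1/2) : ℝ) := by ring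

/-- generic FTC computation: `∫₀^{x_m} φ(x) (x_m²-x²)^{-1/2} dx = α π/2 - Q(0) x_m`
where `F = α arcsin(x/x_m) + Q(x)√(x_m²-x²)` is an antiderivative. -/
lemma aux_ftc (hxm : 0 < x_m) (α : ℝ) (Q Q' φ : ℝ → ℝ)
    (hQ : ∀ x, HasDerivAt Q (Q' x) x) (hQc : Continuous Q) (hφ : Continuous φ)
    (key : ∀ x ∈ Ioo (0:ℝ) x_m, α + Q' x * (x_m ^ 2 - x ^ 2) - Q x * x = φ x) :
    ∫ x in (0:ℝ)..x_m, φ x * (x_m ^ 2 - x ^ 2) ^ (-(1/2) : ℝ)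
      = α * (Real.pi / 2) - Q 0 * x_m := by
  set F : ℝ → ℝ := fun x => α * Real.arcsin (x / x_m) + Q x * Real.sqrt (x_m ^ 2 - x ^ 2)
    with hF
  have hFc : ContinuousOn F (Icc 0 x_m) := by
    apply ContinuousOn.add
    · exact (continuous_const.mul (Real.continuous_arcsin.comp
        (continuous_id.div_const _))).continuousOn
    · exact (hQc.mul ((continuous_const.sub (continuous_pow 2)).sqrt)).continuousOn
  have hderiv : ∀ x ∈ Ioo (0:ℝ) x_m,
      HasDerivAt F (φ x * (x_m ^ 2 - x ^ 2) ^ (-(1/2) : ℝ)) x := by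
    intro x hx
    have hx0 : 0 < x := hx.1
    have hxlt : x < x_m := hx.2
    have hb : 0 < x_m ^ 2 - x ^ 2 := by nlinarith
    have hsb : 0 < Real.sqrt (x_m ^ 2 - x ^ 2) := Real.sqrt_pos.2 hb
    have hsq : Real.sqrt (x_m ^ 2 - x ^ 2) * Real.sqrt (x_m ^ 2 - x ^ 2)
        = x_m ^ 2 - x ^ 2 := Real.mul_self_sqrt hb.le
    -- arcsin part
    have hd1 : HasDerivAt (fun y => Real.arcsin (y / x_m))
        (1 / Real.sqrt (1 - (x / x_m) ^ 2) * (1 / x_m)) x := by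
      have h1 : x / x_m ≠ -1 := by
        have : 0 < x / x_m := div_pos hx0 hxm
        intro h; rw [h] at this; linarith
      have h2 : x / x_m ≠ 1 := by
        have : x / x_m < 1 := (div_lt_one hxm).2 hxlt
        intro h; rw [h] at this; linarith
      exact (Real.hasDerivAt_arcsin h1 h2).comp x ((hasDerivAt_id x).div_const x_m)
    have harc : (1 : ℝ) / Real.sqrt (1 - (x / x_m) ^ 2) * (1 / x_m)
        = 1 / Real.sqrt (x_m ^ 2 - x ^ 2) := by
      have he : 1 - (x / x_m) ^ 2 = (x_m ^ 2 - x ^ 2) / x_m ^ 2 := by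
        field_simp
      rw [he, Real.sqrt_div hb.le, Real.sqrt_sq hxm.le]
      field_simp
    rw [harc] at hd1
    -- sqrt part
    have hd2 : HasDerivAt (fun y => Real.sqrt (x_m ^ 2 - y ^ 2))
        ((-(2 * x)) / (2 * Real.sqrt (x_m ^ 2 - x ^ 2))) x := by
      have hbase : HasDerivAt (fun y : ℝ => x_m ^ 2 - y ^ 2) (-(2 * x)) x := by
        have := ((hasDerivAt_pow 2 x).const_sub (x_m ^ 2))
        simpa using this
      exact hbase.sqrt (ne_of_gt hb)
    have hd : HasDerivAt F
        (α * (1 / Real.sqrt (x_m ^ 2 - x ^ 2))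
          + (Q' x * Real.sqrt (x_m ^ 2 - x ^ 2)
            + Q x * ((-(2 * x)) / (2 * Real.sqrt (x_m ^ 2 - x ^ 2))))) x :=
      ((hd1.const_mul α)).add ((hQ x).mul hd2)
    convert hd using 1
    have hrpow : (x_m ^ 2 - x ^ 2) ^ (-(1/2) : ℝ) = (Real.sqrt (x_m ^ 2 - x ^ 2))⁻¹ := by
      rw [Real.rpow_neg hb.le, Real.sqrt_eq_rpow]
    have expand : α * (1 / Real.sqrt (x_m ^ 2 - x ^ 2))
          + (Q' x * Real.sqrt (x_m ^ 2 - x ^ 2)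
            + Q x * ((-(2 * x)) / (2 * Real.sqrt (x_m ^ 2 - x ^ 2))))
        = (α + Q' x * (Real.sqrt (x_m ^ 2 - x ^ 2) * Real.sqrt (x_m ^ 2 - x ^ 2))
            - Q x * x) / Real.sqrt (x_m ^ 2 - x ^ 2) := by
      have hsq2 : Real.sqrt (x_m ^ 2 - x ^ 2) ^ 2 = x_m ^ 2 - x ^ 2 := Real.sq_sqrt hb.le
      field_simp
      ring
    rw [expand, hsq, key x hx, hrpow, div_eq_mul_inv]
  have hint := aux_integrable hxm φ hφ
  rw [integral_eq_sub_of_hasDeriv_right_of_le hxm.le hFc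
      (fun x hx => (hderiv x hx).hasDerivWithinAt) hint]
  have h1 : F x_m = α * (Real.pi / 2) := by
    simp [hF, div_self (ne_of_gt hxm), Real.arcsin_one, sub_self]
  have h0 : F 0 = Q 0 * x_m := by
    simp [hF, Real.sqrt_sq hxm.le]
  rw [h1, h0]

end aux

/-- Evaluation of the variational functional of Theorem 1 for the Duffing
oscillator at the trial function `g(x) = x/(x_m²√(x_m² − x²))`: one has
`g(0) = 0`, `g'(x) = (x_m² − x²)^{-3/2} > 0`, and the functional equals
`(π²/4)/(1 + 3δx_m²/4)`, which is the bound (3.4). -/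
theorem stmt_14 (δ x_m : ℝ) (hδ : 0 ≤ δ) (hxm : 0 < x_m)
    (g : ℝ → ℝ)
    (hg : ∀ x ∈ Set.Ico 0 x_m, g x = x / (x_m ^ 2 * Real.sqrt (x_m ^ 2 - x ^ 2))) :
    g 0 = 0 ∧
    (∀ x ∈ Set.Ioo 0 x_m,
      HasDerivAt g ((x_m ^ 2 - x ^ 2) ^ (-(3/2) : ℝ)) x ∧
        0 < (x_m ^ 2 - x ^ 2) ^ (-(3/2) : ℝ)) ∧
    (1/2) * (∫ x in (0:ℝ)..x_m, ((x_m ^ 2 - x ^ 2) ^ (-(3/2) : ℝ)) ^ ((1:ℝ)/3)) ^ 3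
        / (∫ x in (0:ℝ)..x_m, (x + δ * x ^ 3) * g x)
      = (Real.pi ^ 2 / 4) * (1 / (1 + 3 * δ * x_m ^ 2 / 4)) := by
  refine ⟨?_, ?_, ?_⟩
  · rw [hg 0 ⟨le_refl _, hxm⟩]; simp
  · -- derivative
    intro x hx
    have hx0 : 0 < x := hx.1
    have hxlt : x < x_m := hx.2
    have hb : 0 < x_m ^ 2 - x ^ 2 := by nlinarith
    constructor
    · have hsb : 0 < Real.sqrt (x_m ^ 2 - x ^ 2) := Real.sqrt_pos.2 hb
      have hsq : Real.sqrt (x_m ^ 2 - x ^ 2) * Real.sqrt (x_m ^ 2 - x ^ 2)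
          = x_m ^ 2 - x ^ 2 := Real.mul_self_sqrt hb.le
      -- derivative of the explicit formula
      have hden : HasDerivAt (fun y => x_m ^ 2 * Real.sqrt (x_m ^ 2 - y ^ 2))
          (x_m ^ 2 * ((-(2 * x)) / (2 * Real.sqrt (x_m ^ 2 - x ^ 2)))) x := by
        have hbase : HasDerivAt (fun y : ℝ => x_m ^ 2 - y ^ 2) (-(2 * x)) x := by
          simpa using ((hasDerivAt_pow 2 x).const_sub (x_m ^ 2))
        exact (hbase.sqrt (ne_of_gt hb)).const_mul _
      have hdiv : HasDerivAt (fun y => y / (x_m ^ 2 * Real.sqrt (x_m ^ 2 - y ^ 2)))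
          ((1 * (x_m ^ 2 * Real.sqrt (x_m ^ 2 - x ^ 2))
            - x * (x_m ^ 2 * ((-(2 * x)) / (2 * Real.sqrt (x_m ^ 2 - x ^ 2)))))
            / (x_m ^ 2 * Real.sqrt (x_m ^ 2 - x ^ 2)) ^ 2) x :=
        (hasDerivAt_id x).div hden (by positivity)
      have heq : (1 * (x_m ^ 2 * Real.sqrt (x_m ^ 2 - x ^ 2))
            - x * (x_m ^ 2 * ((-(2 * x)) / (2 * Real.sqrt (x_m ^ 2 - x ^ 2)))))
            / (x_m ^ 2 * Real.sqrt (x_m ^ 2 - x ^ 2)) ^ 2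
          = (x_m ^ 2 - x ^ 2) ^ (-(3/2) : ℝ) := by
        have hrpow : (x_m ^ 2 - x ^ 2) ^ (-(3/2) : ℝ)
            = ((x_m ^ 2 - x ^ 2) * Real.sqrt (x_m ^ 2 - x ^ 2))⁻¹ := by
          rw [show (-(3/2) : ℝ) = -(1 + 1/2) by norm_num, Real.rpow_neg hb.le,
            Real.rpow_add hb, Real.rpow_one, Real.sqrt_eq_rpow]
        have hsq2 : Real.sqrt (x_m ^ 2 - x ^ 2) ^ 2 = x_m ^ 2 - x ^ 2 := Real.sq_sqrt hb.le
        rw [hrpow, inv_eq_one_div, div_eq_div_iff (by positivity) (by positivity)]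
        field_simp
        linear_combination (-x ^ 2) * hsq2
      rw [heq] at hdiv
      -- transfer to g via local equality
      apply hdiv.congr_of_eventuallyEq
      have hmem : Ioo (0:ℝ) x_m ∈ nhds x := isOpen_Ioo.mem_nhds hx
      filter_upwards [hmem] with y hy
      exact hg y ⟨hy.1.le, hy.2⟩
    · exact Real.rpow_pos_of_pos hb _
  · -- the integral identity
    have hnum : (∫ x in (0:ℝ)..x_m, ((x_m ^ 2 - x ^ 2) ^ (-(3/2) : ℝ)) ^ ((1:ℝ)/3))
        = Real.pi / 2 := by
      have hcongr : ∀ x ∈ uIcc (0:ℝ) x_m,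
          ((x_m ^ 2 - x ^ 2) ^ (-(3/2) : ℝ)) ^ ((1:ℝ)/3)
            = (1 : ℝ) * (x_m ^ 2 - x ^ 2) ^ (-(1/2) : ℝ) := by
        intro x hx
        rw [uIcc_of_le hxm.le] at hx
        have hb : 0 ≤ x_m ^ 2 - x ^ 2 := by nlinarith [hx.1, hx.2]
        rw [one_mul, ← Real.rpow_mul hb]
        norm_num
      rw [intervalIntegral.integral_congr hcongr]
      have := aux_ftc hxm 1 (fun _ => 0) (fun _ => 0) (fun _ => 1)
        (fun x => hasDerivAt_const x 0) continuous_const continuous_const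
        (fun x _ => by ring)
      rw [this]; ring
    have hden : (∫ x in (0:ℝ)..x_m, (x + δ * x ^ 3) * g x)
        = (Real.pi / 4) * (1 + 3 * δ * x_m ^ 2 / 4) := by
      set φ : ℝ → ℝ := fun x => (x ^ 2 + δ * x ^ 4) / x_m ^ 2 with hφdef
      have hcongr : (∫ x in (0:ℝ)..x_m, (x + δ * x ^ 3) * g x)
          = ∫ x in (0:ℝ)..x_m, φ x * (x_m ^ 2 - x ^ 2) ^ (-(1/2) : ℝ) := by
        apply intervalIntegral.integral_congr_ae
        have hae : ∀ᵐ x : ℝ ∂volume, x ≠ x_m := by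
          rw [MeasureTheory.ae_iff]
          have : {x : ℝ | ¬x ≠ x_m} = {x_m} := by ext y; simp
          rw [this]; exact Real.volume_singleton
        filter_upwards [hae] with x hxne hmem
        rw [uIoc_of_le hxm.le] at hmem
        have hx0 : 0 < x := hmem.1
        have hxlt : x < x_m := lt_of_le_of_ne hmem.2 hxne
        have hb : 0 < x_m ^ 2 - x ^ 2 := by nlinarith
        have hsb : 0 < Real.sqrt (x_m ^ 2 - x ^ 2) := Real.sqrt_pos.2 hb
        rw [hg x ⟨hx0.le, hxlt⟩]
        have hrpow : (x_m ^ 2 - x ^ 2) ^ (-(1/2) : ℝ)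
            = (Real.sqrt (x_m ^ 2 - x ^ 2))⁻¹ := by
          rw [Real.rpow_neg hb.le, Real.sqrt_eq_rpow]
        rw [hrpow, hφdef]
        field_simp
      rw [hcongr]
      have hQd : ∀ x : ℝ, HasDerivAt
          (fun y => (-(y/2) - δ * y ^ 3 / 4 - 3 * δ * x_m ^ 2 * y / 8) / x_m ^ 2)
          ((-(1/2) - 3 * δ * x ^ 2 / 4 - 3 * δ * x_m ^ 2 / 8) / x_m ^ 2) x := by
        intro x
        have h3 : HasDerivAt (fun y : ℝ => y ^ 3) (3 * x ^ 2) x := by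
          simpa using hasDerivAt_pow 3 x
        have : HasDerivAt (fun y : ℝ => -(y/2) - δ * y ^ 3 / 4 - 3 * δ * x_m ^ 2 * y / 8)
            (-(1/2) - 3 * δ * x ^ 2 / 4 - 3 * δ * x_m ^ 2 / 8) x := by
          have := (((hasDerivAt_id x).div_const 2).neg.sub
            ((h3.const_mul δ).div_const 4)).sub
            (((hasDerivAt_id x).const_mul (3 * δ * x_m ^ 2)).div_const 8)
          refine this.congr_deriv ?_
          ring
        exact this.div_const _
      have hφc : Continuous φ := by
        rw [hφdef]
        exact ((continuous_pow 2).add (continuous_const.mul (continuous_pow 4))).div_const _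
      have hQc : Continuous
          (fun y => (-(y/2) - δ * y ^ 3 / 4 - 3 * δ * x_m ^ 2 * y / 8) / x_m ^ 2) :=
        ((((continuous_id.div_const 2).neg.sub
          ((continuous_const.mul (continuous_pow 3)).div_const 4)).sub
          ((continuous_const.mul continuous_id).div_const 8)).div_const _)
      have := aux_ftc hxm (1/2 + 3 * δ * x_m ^ 2 / 8)
        (fun y => (-(y/2) - δ * y ^ 3 / 4 - 3 * δ * x_m ^ 2 * y / 8) / x_m ^ 2)
        (fun x => (-(1/2) - 3 * δ * x ^ 2 / 4 - 3 * δ * x_m ^ 2 / 8) / x_m ^ 2)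
        φ hQd hQc hφc ?_
      · rw [this]; field_simp; ring
      · intro x hx
        have hx_m : x_m ≠ 0 := hxm.ne'
        rw [hφdef]
        field_simp
        ring
    rw [hnum, hden]
    have hpos : 0 < 1 + 3 * δ * x_m ^ 2 / 4 := by positivity
    have hπ : Real.pi ≠ 0 := Real.pi_ne_zero
    field_simp
    ring
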